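/- Let C be a nonsingular real circulant matrix. Then every eigenvalue of the symmetric matrix Y_n C equals ±|λ_j| for some eigenvalue λ_j of C, and the multiset of singular values of Y_n C equals the multiset {|λ_j| : j = 1,…,n} of absolute values of eigenvalues of C. -/

import Mathlib

open Matrix Complex

/-- The exchange (anti-identity) matrix over `ℂ`. -/
def exchangeMatrixC (n : ℕ) : Matrix (Fin n) (Fin n) ℂ :=
  fun i j => if (i : ℕ) + (j : ℕ) + 1 = n then 1 else 0

/-- The unitary Fourier matrix `F = (ω^{jk}/√n)` with `ω = e^{-2πi/n}`. -/
noncomputable def fourierMatrix (n : ℕ) : Matrix (Fin n) (Fin n) ℂ :=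
  Matrix.of fun j k : Fin n =>
    Complex.exp (-(2 * (Real.pi : ℂ) * Complex.I * (j : ℕ) * (k : ℕ)) / n) /
      (Real.sqrt n : ℂ)

/-- The singular values of a complex square matrix `M`: the nonnegative square
roots of the eigenvalues of `Mᴴ * M`. -/
noncomputable def singularValuesC {n : ℕ} (M : Matrix (Fin n) (Fin n) ℂ) : Fin n → ℝ :=
  fun i => Real.sqrt ((Matrix.isHermitian_conjTranspose_mul_self M).eigenvalues i)

section Aux

open Polynomial

lemma exchange_mul_apply {n : ℕ} (M : Matrix (Fin n) (Fin n) ℂ) (i : Fin n) (j : Fin n) :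
    (exchangeMatrixC n * M) i j = M i.rev j := by
  rw [Matrix.mul_apply, Finset.sum_eq_single i.rev]
  · have h : (i : ℕ) + (n - ((i : ℕ) + 1)) + 1 = n := by omega
    simp [exchangeMatrixC, Fin.val_rev, h]
  · intro k _ hk
    have h : ¬((i : ℕ) + (k : ℕ) + 1 = n) := by
      intro h
      apply hk; apply Fin.ext; rw [Fin.val_rev]; omega
    simp [exchangeMatrixC, h]
  · simp

lemma mul_exchange_apply {n : ℕ} (M : Matrix (Fin n) (Fin n) ℂ) (i : Fin n) (j : Fin n) :
    (M * exchangeMatrixC n) i j = M i j.rev := by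
  rw [Matrix.mul_apply, Finset.sum_eq_single j.rev]
  · have h : (n - ((j : ℕ) + 1)) + (j : ℕ) + 1 = n := by omega
    simp [exchangeMatrixC, Fin.val_rev, h]
  · intro k _ hk
    have h : ¬((k : ℕ) + (j : ℕ) + 1 = n) := by
      intro h
      apply hk; apply Fin.ext; rw [Fin.val_rev]; omega
    simp [exchangeMatrixC, h]
  · simp

lemma exchange_conjTranspose {n : ℕ} : (exchangeMatrixC n)ᴴ = exchangeMatrixC n := by
  ext i j
  simp only [Matrix.conjTranspose_apply, exchangeMatrixC]
  have h : ((j : ℕ) + (i : ℕ) + 1 = n) ↔ ((i : ℕ) + (j : ℕ) + 1 = n) := by omega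
  rw [apply_ite (star : ℂ → ℂ), star_one, star_zero, if_congr h rfl rfl]

lemma exchange_mul_self {n : ℕ} : exchangeMatrixC n * exchangeMatrixC n = 1 := by
  ext i j
  rw [exchange_mul_apply]
  simp only [exchangeMatrixC, Fin.val_rev, Matrix.one_apply]
  have hi := i.isLt; have hj := j.isLt
  have h : ((n - ((i : ℕ) + 1)) + (j : ℕ) + 1 = n) ↔ (i = j) := by
    rw [Fin.ext_iff]; omega
  rw [if_congr h rfl rfl]

lemma charpoly_diagonal' {n : ℕ} (d : Fin n → ℂ) :
    (Matrix.diagonal d).charpoly = ∏ i, (X - Polynomial.C (d i)) := by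
  have h : charmatrix (Matrix.diagonal d)
      = Matrix.diagonal (fun i => (X : ℂ[X]) - Polynomial.C (d i)) := by
    ext i j
    by_cases h : i = j
    · subst h; simp [charmatrix_apply, Matrix.diagonal_apply_eq]
    · simp [charmatrix_apply, Matrix.diagonal_apply_ne _ h]
  rw [Matrix.charpoly, h, Matrix.det_diagonal]

lemma charpoly_unitary_conj {n : ℕ} (U A : Matrix (Fin n) (Fin n) ℂ)
    (h1 : U * Uᴴ = 1) :
    (U * A * Uᴴ).charpoly = A.charpoly := by
  set f : ℂ →+* ℂ[X] := Polynomial.C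
  have hmap1 : U.map f * Uᴴ.map f = 1 := by
    rw [← Matrix.map_mul, h1]; simp [f]
  have key : charmatrix (U * A * Uᴴ) = U.map f * charmatrix A * Uᴴ.map f := by
    unfold charmatrix
    have hscal : U.map f * Matrix.scalar (Fin n) (X : ℂ[X]) =
        Matrix.scalar (Fin n) (X : ℂ[X]) * U.map f :=
      (Matrix.scalar_commute (X : ℂ[X]) (fun r => Commute.all _ _) (U.map f)).symm
    have hmm : (RingHom.mapMatrix f) (U * A * Uᴴ) = U.map f * A.map f * Uᴴ.map f := by
      simp only [RingHom.mapMatrix_apply, Matrix.map_mul]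
    have hmm2 : (RingHom.mapMatrix f) A = A.map f := rfl
    rw [hmm, hmm2, Matrix.mul_sub, Matrix.sub_mul, mul_assoc (U.map f) (A.map f)]
    congr 1
    rw [hscal, mul_assoc, hmap1, mul_one]
  rw [Matrix.charpoly, key, Matrix.det_mul, Matrix.det_mul, Matrix.charpoly]
  have hd : (U.map f).det * (Uᴴ.map f).det = 1 := by
    rw [← Matrix.det_mul, hmap1, Matrix.det_one]
  calc (U.map f).det * (charmatrix A).det * (Uᴴ.map f).det
      = (charmatrix A).det * ((U.map f).det * (Uᴴ.map f).det) := by ring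
    _ = (charmatrix A).det := by rw [hd, mul_one]

lemma fourier_key {n : ℕ} (j k : Fin n) :
    ∑ m : Fin n, (starRingEnd ℂ) (fourierMatrix n m j) * fourierMatrix n m k
      = if j = k then 1 else 0 := by
  have hn0 : 0 < n := j.pos
  have hnC : (n : ℂ) ≠ 0 := Nat.cast_ne_zero.mpr hn0.ne'
  set d : ℤ := (j : ℕ) - (k : ℕ) with hd_def
  set ω : ℂ := Complex.exp (2 * (Real.pi : ℂ) * Complex.I * (d : ℂ) / n) with hω
  have hterm : ∀ m : Fin n,
      (starRingEnd ℂ) (fourierMatrix n m j) * fourierMatrix n m k = ω ^ (m : ℕ) / n := by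
    intro m
    simp only [fourierMatrix, Matrix.of_apply]
    rw [map_div₀, ← Complex.exp_conj, div_mul_div_comm, ← Complex.exp_add, hω,
      ← Complex.exp_nat_mul]
    congr 1
    · have hc : (starRingEnd ℂ) (-(2 * (Real.pi : ℂ) * Complex.I * (m : ℕ) * (j : ℕ)) / n)
          = (2 * (Real.pi : ℂ) * Complex.I * (m : ℕ) * (j : ℕ)) / n := by
        simp [map_div₀, Complex.conj_I, map_ofNat]
      rw [hc]
      have hdc : (d : ℂ) = ((j : ℕ) : ℂ) - ((k : ℕ) : ℂ) := by
        rw [hd_def]; push_cast; ring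
      rw [hdc]
      field_simp
      ring
    · rw [Complex.conj_ofReal, ← Complex.ofReal_mul, Real.mul_self_sqrt (Nat.cast_nonneg n),
        Complex.ofReal_natCast]
  rw [Finset.sum_congr rfl (fun m _ => hterm m), ← Finset.sum_div]
  rw [Fin.sum_univ_eq_sum_range (fun i => ω ^ i) n]
  by_cases hjk : j = k
  · subst hjk
    have : d = 0 := by omega
    rw [if_pos rfl]
    simp [hω, this, hnC]
  · rw [if_neg hjk]
    have hωn : ω ^ n = 1 := by
      rw [hω, ← Complex.exp_nat_mul]
      have : (n : ℂ) * (2 * (Real.pi : ℂ) * Complex.I * (d : ℂ) / n)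
          = (d : ℂ) * (2 * (Real.pi : ℂ) * Complex.I) := by
        field_simp
      rw [this, Complex.exp_int_mul_two_pi_mul_I]
    have hω1 : ω ≠ 1 := by
      intro h
      rw [hω, Complex.exp_eq_one_iff] at h
      obtain ⟨m, hm⟩ := h
      have h2πI : (2 : ℂ) * Real.pi * Complex.I ≠ 0 := by
        simp [Real.pi_ne_zero, Complex.I_ne_zero]
      have hdm : (d : ℂ) = (m : ℂ) * n := by
        field_simp at hm
        have h3 : (2 * (Real.pi : ℂ) * Complex.I) * (d : ℂ)
            = (2 * (Real.pi : ℂ) * Complex.I) * ((m : ℂ) * n) := by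
          linear_combination (2 * (Real.pi : ℂ) * Complex.I) * hm
        exact mul_left_cancel₀ h2πI h3
      have hdmz : d = m * n := by exact_mod_cast hdm
      have hj := j.isLt; have hk := k.isLt
      have hne : d ≠ 0 := by
        simp only [hd_def]
        intro h0
        apply hjk
        apply Fin.ext
        omega
      have hdlt : d < n ∧ -(n : ℤ) < d := by constructor <;> omega
      have hm0 : m ≠ 0 := by rintro rfl; simp at hdmz; exact hne hdmz
      rcases lt_or_gt_of_ne hm0 with hm' | hm'
      · have : d ≤ -(n : ℤ) := by
          rw [hdmz]
          have : m ≤ -1 := by omega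
          nlinarith
        omega
      · have : (n : ℤ) ≤ d := by
          rw [hdmz]
          have : 1 ≤ m := by omega
          nlinarith
        omega
    rw [geom_sum_eq hω1, hωn]
    simp

lemma fourier_symm {n : ℕ} (a b : Fin n) : fourierMatrix n a b = fourierMatrix n b a := by
  simp only [fourierMatrix, Matrix.of_apply]
  ring_nf

lemma conjTranspose_fourier_mul_self {n : ℕ} :
    (fourierMatrix n)ᴴ * fourierMatrix n = 1 := by
  ext j k
  rw [Matrix.mul_apply]
  simp only [Matrix.conjTranspose_apply, Complex.star_def]
  rw [fourier_key j k, Matrix.one_apply]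

lemma fourier_mul_conjTranspose_self {n : ℕ} :
    fourierMatrix n * (fourierMatrix n)ᴴ = 1 := by
  ext j k
  rw [Matrix.mul_apply]
  simp only [Matrix.conjTranspose_apply, Complex.star_def]
  have : ∀ m : Fin n, fourierMatrix n j m * (starRingEnd ℂ) (fourierMatrix n k m)
      = (starRingEnd ℂ) (fourierMatrix n m k) * fourierMatrix n m j := by
    intro m
    rw [fourier_symm j m, fourier_symm k m, mul_comm]
  rw [Finset.sum_congr rfl (fun m _ => this m), fourier_key k j, Matrix.one_apply]
  exact if_congr eq_comm rfl rfl

end Aux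

/-- For a nonsingular real circulant `C` with eigenvalues `Λ j`, every
eigenvalue of the symmetric matrix `Y C` equals `±|λ_j|` for some `j`, and the
multiset of singular values of `Y C` is `{|λ_j|}`. -/
theorem stmt14 (n : ℕ) (C : Matrix (Fin n) (Fin n) ℂ) (Λ : Fin n → ℂ)
    (hreal : ∃ v : Fin n → ℝ, C = (Matrix.circulant v).map (Complex.ofReal))
    (hdecomp : C = fourierMatrix n * Matrix.diagonal Λ * (fourierMatrix n)ᴴ)
    (hns : ∀ j, Λ j ≠ 0) :
    (∀ μ : ℂ, μ ∈ spectrum ℂ (exchangeMatrixC n * C) →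
      ∃ j : Fin n, μ = (‖Λ j‖ : ℂ) ∨ μ = -(‖Λ j‖ : ℂ)) ∧
    Multiset.map (singularValuesC (exchangeMatrixC n * C)) Finset.univ.val =
      Multiset.map (fun j => ‖Λ j‖) Finset.univ.val := by
  classical
  set F := fourierMatrix n with hF
  set Y := exchangeMatrixC n with hY
  set M := Y * C with hM
  set g : Fin n → ℂ := fun j => ((‖Λ j‖ ^ 2 : ℝ) : ℂ) with hg
  have hF1 : F * Fᴴ = 1 := fourier_mul_conjTranspose_self
  have hF2 : Fᴴ * F = 1 := conjTranspose_fourier_mul_self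
  -- C^H C = F (diag g) F^H
  have hCstar : Cᴴ = F * Matrix.diagonal (star Λ) * Fᴴ := by
    rw [hdecomp, Matrix.conjTranspose_mul, Matrix.conjTranspose_mul,
      Matrix.conjTranspose_conjTranspose, Matrix.diagonal_conjTranspose, ← Matrix.mul_assoc]
  have hCH : Cᴴ * C = F * Matrix.diagonal g * Fᴴ := by
    rw [hCstar]
    conv_lhs => rw [hdecomp]
    have hstep : F * Matrix.diagonal (star Λ) * Fᴴ * (F * Matrix.diagonal Λ * Fᴴ)
        = F * (Matrix.diagonal (star Λ) * Matrix.diagonal Λ) * Fᴴ := by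
      simp only [Matrix.mul_assoc]
      rw [← Matrix.mul_assoc Fᴴ F, hF2, Matrix.one_mul]
    have hfun : (fun i => star Λ i * Λ i) = g := by
      funext j
      simp only [Pi.star_apply, hg, Complex.star_def]
      rw [mul_comm, Complex.mul_conj, ← Complex.sq_norm]
    rw [hstep, Matrix.diagonal_mul_diagonal, hfun]
  -- M^H M = C^H C
  have hMHM : Mᴴ * M = Cᴴ * C := by
    rw [hM, Matrix.conjTranspose_mul, exchange_conjTranspose]
    calc Cᴴ * Y * (Y * C) = Cᴴ * (Y * Y * C) := by simp only [Matrix.mul_assoc]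
      _ = Cᴴ * C := by rw [exchange_mul_self, Matrix.one_mul]
  -- M * M = C^H C  (uses realness)
  have hMM : M * M = Cᴴ * C := by
    obtain ⟨v, hv⟩ := hreal
    have hYCY : Y * C * Y = Cᴴ := by
      ext i j
      rw [mul_exchange_apply, exchange_mul_apply, Matrix.conjTranspose_apply, hv]
      simp only [Matrix.map_apply, Matrix.circulant_apply, Complex.star_def,
        Complex.conj_ofReal]
      congr 2
      apply Fin.ext
      simp only [Fin.sub_def, Fin.val_rev, Fin.val_mk]
      have hi := i.isLt; have hj := j.isLt
      congr 1
      omega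
    calc M * M = (Y * C * Y) * C := by rw [hM]; simp only [Matrix.mul_assoc]
      _ = Cᴴ * C := by rw [hYCY]
  -- the unit corresponding to F
  set U : (Matrix (Fin n) (Fin n) ℂ)ˣ := ⟨F, Fᴴ, hF1, hF2⟩ with hU
  constructor
  · intro μ hμ
    have hsq : μ ^ 2 ∈ spectrum ℂ (M ^ 2) :=
      spectrum.pow_image_subset M 2 ⟨μ, hμ, rfl⟩
    have hM2 : M ^ 2 = F * Matrix.diagonal g * Fᴴ := by
      rw [pow_two, hMM, hCH]
    rw [hM2] at hsq
    have hspec : spectrum ℂ (F * Matrix.diagonal g * Fᴴ)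
        = spectrum ℂ (Matrix.diagonal g) := by
      have := spectrum.units_conjugate (R := ℂ) (a := Matrix.diagonal g) (u := U)
      simpa [hU] using this
    rw [hspec, spectrum_diagonal] at hsq
    obtain ⟨j, hj⟩ := hsq
    refine ⟨j, ?_⟩
    have hj2 : μ ^ 2 = ((‖Λ j‖ : ℂ)) ^ 2 := by
      rw [← hj, hg]
      push_cast
      ring
    have hfac : (μ - (‖Λ j‖ : ℂ)) * (μ + (‖Λ j‖ : ℂ)) = 0 := by
      linear_combination hj2
    rcases mul_eq_zero.mp hfac with h | h
    · exact Or.inl (sub_eq_zero.mp h)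
    · exact Or.inr (eq_neg_of_add_eq_zero_left h)
  · -- multiset of singular values
    open Polynomial in
    have hcp1 : (Mᴴ * M).charpoly = ∏ j, (X - Polynomial.C (g j)) := by
      rw [hMHM, hCH, charpoly_unitary_conj F _ hF1, charpoly_diagonal']
    have H := Matrix.isHermitian_conjTranspose_mul_self M
    have hV1 : (H.eigenvectorUnitary : Matrix (Fin n) (Fin n) ℂ)
        * (H.eigenvectorUnitary : Matrix (Fin n) (Fin n) ℂ)ᴴ = 1 :=
      (Matrix.mem_unitaryGroup_iff).mp H.eigenvectorUnitary.2
    have hcp2 : (Mᴴ * M).charpoly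
        = ∏ i, (X - Polynomial.C ((H.eigenvalues i : ℝ) : ℂ)) := by
      conv_lhs => rw [H.spectral_theorem]
      rw [Unitary.conjStarAlgAut_apply, Matrix.star_eq_conjTranspose, charpoly_unitary_conj _ _ hV1, charpoly_diagonal']
      rfl
    set c : Fin n → ℂ := fun i => ((H.eigenvalues i : ℝ) : ℂ) with hc
    have hprod : ∏ i, (X - Polynomial.C (c i)) = ∏ j, (X - Polynomial.C (g j)) := by
      rw [← hcp2, hcp1]
    have hms : Multiset.map c Finset.univ.val = Multiset.map g Finset.univ.val := by
      have h1 := Polynomial.roots_multiset_prod_X_sub_C (Multiset.map c Finset.univ.val)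
      have h2 := Polynomial.roots_multiset_prod_X_sub_C (Multiset.map g Finset.univ.val)
      rw [Multiset.map_map] at h1 h2
      have e1 : (Multiset.map ((fun a => X - Polynomial.C a) ∘ c) Finset.univ.val).prod
          = ∏ i, (X - Polynomial.C (c i)) := by
        rw [Finset.prod_eq_multiset_prod]
        rfl
      have e2 : (Multiset.map ((fun a => X - Polynomial.C a) ∘ g) Finset.univ.val).prod
          = ∏ j, (X - Polynomial.C (g j)) := by
        rw [Finset.prod_eq_multiset_prod]
        rfl
      rw [e1] at h1
      rw [e2] at h2
      rw [← h1, ← h2, hprod]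
    have hmsR : Multiset.map H.eigenvalues Finset.univ.val
        = Multiset.map (fun j => ‖Λ j‖ ^ 2) Finset.univ.val := by
      have h := congrArg (Multiset.map Complex.re) hms
      rw [Multiset.map_map, Multiset.map_map] at h
      have e1 : Complex.re ∘ c = H.eigenvalues := by funext i; exact Complex.ofReal_re _
      have e2 : Complex.re ∘ g = fun j => ‖Λ j‖ ^ 2 := by funext j; exact Complex.ofReal_re _
      rw [e1, e2] at h
      exact h
    have h := congrArg (Multiset.map Real.sqrt) hmsR
    rw [Multiset.map_map, Multiset.map_map] at h
    have e3 : Real.sqrt ∘ H.eigenvalues = singularValuesC M := by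
      funext i; rfl
    have e4 : (Real.sqrt ∘ fun j => ‖Λ j‖ ^ 2)
        = fun j => ‖Λ j‖ := by
      funext j
      exact Real.sqrt_sq (norm_nonneg _)
    rw [e3, e4] at h
    exact h
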